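/- Let F be a cumulative distribution function with hazard rate h on [t₀,∞). Assume condition (BasicH) holds for h and that h is smoothly varying of index α−1 and order m for some m ≥ 1 and some α < 1. Then there exist positive numbers t₁ and M such that for every t ≥ t₁, the function x ↦ F̄(t−x)·F̄(x) is nonincreasing on the interval [M, t/2]. -/

import Mathlib

open MeasureTheory Filter Set

noncomputable section

/-- `h` is a hazard rate for the upper tail of `F` on `[t₀, ∞)`:
`F̄(t₀) > 0`, `h` is nonnegative and locally integrable on `[t₀, ∞)`, and
`F̄(t) = F̄(t₀) · exp(−∫_{t₀}^t h(u) du)` for all `t ≥ t₀`. -/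
def HasHazardRate (F h : ℝ → ℝ) (t₀ : ℝ) : Prop :=
  0 < 1 - F t₀ ∧ (∀ t, t₀ ≤ t → 0 ≤ h t) ∧
    MeasureTheory.LocallyIntegrableOn h (Set.Ici t₀) ∧
    ∀ t, t₀ ≤ t → 1 - F t = (1 - F t₀) * Real.exp (-(∫ u in t₀..t, h u))

/-- `g`, positive on a neighborhood of `∞`, is regularly varying of index `ρ`:
for every `a > 0`, `g(at)/g(t) → a^ρ` as `t → ∞`. -/
def RegularlyVarying (g : ℝ → ℝ) (ρ : ℝ) : Prop :=
  (∀ᶠ t in Filter.atTop, 0 < g t) ∧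
    ∀ a : ℝ, 0 < a →
      Filter.Tendsto (fun t => g (a * t) / g t) Filter.atTop (nhds (a ^ ρ))

/-- `g` is smoothly varying of index `α` and order `m`: `g` is `m` times continuously
differentiable on a neighborhood of `∞` and `g^(m)` is regularly varying of index `α − m`. -/
def SmoothlyVarying (g : ℝ → ℝ) (α : ℝ) (m : ℕ) : Prop :=
  (∃ T : ℝ, ContDiffOn ℝ (m : ℕ∞) g (Set.Ici T)) ∧
    RegularlyVarying (iteratedDeriv m g) (α - m)

/-- Condition (BasicH): `h` is regularly varying of some index, `t·h(t) → ∞`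
and `h(t) → 0` as `t → ∞`. -/
def BasicH (h : ℝ → ℝ) : Prop :=
  (∃ ρ : ℝ, RegularlyVarying h ρ) ∧
    Filter.Tendsto (fun t => t * h t) Filter.atTop Filter.atTop ∧
    Filter.Tendsto h Filter.atTop (nhds 0)

/-- `F` is a cumulative distribution function on `ℝ`. -/
def IsCDF (F : ℝ → ℝ) : Prop :=
  Monotone F ∧ (∀ x, ContinuousWithinAt F (Set.Ici x) x) ∧
    Filter.Tendsto F Filter.atBot (nhds 0) ∧ Filter.Tendsto F Filter.atTop (nhds 1)

/-- under (BasicH) and smooth variation of index `α − 1 < 0` and order `m ≥ 1`,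
for large `t` the function `x ↦ F̄(t−x)·F̄(x)` is nonincreasing on `[M, t/2]`. -/
lemma iteratedDerivWithin_eq_iteratedDeriv_of_isOpen {f : ℝ → ℝ} {s : Set ℝ}
    (hs : IsOpen s) (n : ℕ) {x : ℝ} (hx : x ∈ s) :
    iteratedDerivWithin n f s x = iteratedDeriv n f x := by
  rw [iteratedDerivWithin, iteratedDeriv, iteratedFDerivWithin_of_isOpen n hs hx]

lemma tendsto_atTop_of_deriv_ge {f : ℝ → ℝ} {a c : ℝ} (hc : 0 < c)
    (hcont : ContinuousOn f (Set.Ici a))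
    (hdiff : DifferentiableOn ℝ f (Set.Ioi a))
    (hge : ∀ x ∈ Set.Ioi a, c ≤ deriv f x) :
    Filter.Tendsto f Filter.atTop Filter.atTop := by
  have key := (convex_Ici a).mul_sub_le_image_sub_of_le_deriv hcont
    (by rwa [interior_Ici]) (by rwa [interior_Ici]) a (Set.self_mem_Ici)
  have h1 : Filter.Tendsto (fun y => f a + c * (y - a)) Filter.atTop Filter.atTop := by
    apply Filter.tendsto_atTop_add_const_left
    exact (Filter.tendsto_atTop_add_const_right _ _ tendsto_id).const_mul_atTop hc
  apply Filter.tendsto_atTop_mono' _ _ h1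
  filter_upwards [Filter.eventually_ge_atTop a] with y hy
  have := key y hy hy
  linarith

lemma cascade {h : ℝ → ℝ} {m : ℕ} {T : ℝ}
    (hcont : ∀ j ≤ m, ContinuousOn (iteratedDeriv j h) (Set.Ioi T))
    (hdiff : ∀ j < m, ∀ x ∈ Set.Ioi T, DifferentiableAt ℝ (iteratedDeriv j h) x)
    (h0 : Filter.Tendsto h Filter.atTop (nhds 0)) (σ : ℝ) :
    ∀ j ≤ m, ∀ c, 0 < c → (∀ᶠ t in Filter.atTop, c ≤ σ * iteratedDeriv j h t) → False := by
  intro j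
  induction j with
  | zero =>
    intro _ c hc hev
    have h0' : Filter.Tendsto (fun t => σ * h t) Filter.atTop (nhds 0) := by
      simpa using h0.const_mul σ
    have hlt : ∀ᶠ t in Filter.atTop, σ * h t < c := h0'.eventually (gt_mem_nhds hc)
    obtain ⟨t, h1, h2⟩ := (hev.and hlt).exists
    rw [iteratedDeriv_zero] at h1
    linarith
  | succ j ih =>
    intro hjm c hc hev
    obtain ⟨a₀, ha₀⟩ := Filter.eventually_atTop.1 hev
    set a := max a₀ (T + 1) with ha
    have haT : T < a := lt_of_lt_of_le (by linarith) (le_max_right _ _)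
    have hIci : Set.Ici a ⊆ Set.Ioi T := fun x hx => lt_of_lt_of_le haT hx
    have hIoi : Set.Ioi a ⊆ Set.Ioi T := fun x hx => lt_trans haT hx
    set g := fun t => σ * iteratedDeriv j h t with hg
    have hgcont : ContinuousOn g (Set.Ici a) :=
      ((hcont j (le_of_lt (Nat.lt_of_succ_le hjm))).mono hIci).const_smul σ
    have hgdiff : DifferentiableOn ℝ g (Set.Ioi a) := fun x hx =>
      (((hdiff j (Nat.lt_of_succ_le hjm)) x (hIoi hx)).const_mul σ).differentiableWithinAt
    have hgderiv : ∀ x ∈ Set.Ioi a, c ≤ deriv g x := by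
      intro x hx
      rw [hg, deriv_const_mul σ ((hdiff j (Nat.lt_of_succ_le hjm)) x (hIoi hx))]
      have := ha₀ x (le_trans (le_max_left _ _) (le_of_lt hx))
      rwa [iteratedDeriv_succ] at this
    have hgtop : Filter.Tendsto g Filter.atTop Filter.atTop :=
      tendsto_atTop_of_deriv_ge hc hgcont hgdiff hgderiv
    exact ih (le_of_lt (Nat.lt_of_succ_le hjm)) 1 one_pos
      (hgtop.eventually_ge_atTop 1)

lemma sign_alt {h : ℝ → ℝ} {m : ℕ} {T : ℝ}
    (hcont : ∀ j ≤ m, ContinuousOn (iteratedDeriv j h) (Set.Ioi T))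
    (hdiff : ∀ j < m, ∀ x ∈ Set.Ioi T, DifferentiableAt ℝ (iteratedDeriv j h) x)
    (h0 : Filter.Tendsto h Filter.atTop (nhds 0))
    (hbase : ∀ᶠ t in Filter.atTop, 0 < iteratedDeriv m h t) :
    ∀ i ≤ m, ∀ᶠ t in Filter.atTop, 0 < (-1 : ℝ) ^ i * iteratedDeriv (m - i) h t := by
  intro i
  induction i with
  | zero => intro _; simpa using hbase
  | succ i ih =>
    intro him
    have hIH := ih (le_of_lt (Nat.lt_of_succ_le him))
    set j := m - (i + 1) with hj
    have hjsucc : m - i = j + 1 := by omega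
    have hjm : j < m := by omega
    rw [hjsucc] at hIH
    set ε := ((-1 : ℝ) ^ i) with hε
    obtain ⟨a₀, ha₀⟩ := Filter.eventually_atTop.1 hIH
    set a := max a₀ (T + 1) with ha
    have haT : T < a := lt_of_lt_of_le (by linarith) (le_max_right _ _)
    have hIci : Set.Ici a ⊆ Set.Ioi T := fun x hx => lt_of_lt_of_le haT hx
    have hIoi : Set.Ioi a ⊆ Set.Ioi T := fun x hx => lt_trans haT hx
    set g := fun t => ε * iteratedDeriv j h t with hg
    have hgcont : ContinuousOn g (Set.Ici a) :=
      ((hcont j (le_of_lt hjm)).mono hIci).const_smul ε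
    have hgmono : StrictMonoOn g (Set.Ici a) := by
      apply strictMonoOn_of_deriv_pos (convex_Ici a) hgcont
      intro x hx
      rw [interior_Ici] at hx
      rw [hg, deriv_const_mul ε ((hdiff j hjm) x (hIoi hx))]
      have := ha₀ x (le_trans (le_max_left _ _) (le_of_lt hx))
      rwa [iteratedDeriv_succ] at this
    have hneg : ∀ t, a ≤ t → g t < 0 := by
      intro t ht
      by_contra hge
      push_neg at hge
      have hc : 0 < g (t + 1) :=
        lt_of_le_of_lt hge (hgmono ht (by simp; linarith) (by linarith))
      refine cascade hcont hdiff h0 ε j (le_of_lt hjm) (g (t + 1)) hc ?_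
      filter_upwards [Filter.eventually_ge_atTop (t + 1)] with s hs
      exact (hgmono.monotoneOn (by simp; linarith) (by simp; linarith) hs)
    filter_upwards [Filter.eventually_ge_atTop a] with t ht
    have h2 : ε * iteratedDeriv j h t < 0 := hneg t ht
    have hpow : (-1 : ℝ) ^ (i + 1) = -ε := by rw [hε, pow_succ]; ring
    rw [hpow, neg_mul]
    linarith


theorem stmt_9 (F h : ℝ → ℝ) (t₀ α : ℝ) (m : ℕ) (hF : IsCDF F)
    (hh : HasHazardRate F h t₀) (hb : BasicH h)
    (hm : 1 ≤ m) (hsm : SmoothlyVarying h (α - 1) m) (hα : α < 1) :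
    ∃ t₁ M : ℝ, 0 < t₁ ∧ 0 < M ∧ ∀ t, t₁ ≤ t →
      AntitoneOn (fun x => (1 - F (t - x)) * (1 - F x)) (Set.Icc M (t / 2)) := by
  obtain ⟨hF0, hhnn, hloc, hFeq⟩ := hh
  obtain ⟨⟨ρ, hRV⟩, hth, h0⟩ := hb
  obtain ⟨⟨T₀, hcd⟩, hRVm⟩ := hsm
  have hpos : ∀ᶠ t in Filter.atTop, 0 < h t := hRV.1
  have hbase : ∀ᶠ t in Filter.atTop, 0 < iteratedDeriv m h t := hRVm.1
  -- infrastructure on the open set `Ioi T₀`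
  have hso : IsOpen (Set.Ioi T₀) := isOpen_Ioi
  have hsu : UniqueDiffOn ℝ (Set.Ioi T₀) := hso.uniqueDiffOn
  have hcd' : ContDiffOn ℝ (m : ℕ∞) h (Set.Ioi T₀) := hcd.mono Set.Ioi_subset_Ici_self
  have hcont : ∀ j ≤ m, ContinuousOn (iteratedDeriv j h) (Set.Ioi T₀) := by
    intro j hj
    have h1 : ContinuousOn (iteratedDerivWithin j h (Set.Ioi T₀)) (Set.Ioi T₀) :=
      hcd'.continuousOn_iteratedDerivWithin (by exact_mod_cast hj) hsu
    exact h1.congr fun x hx =>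
      (iteratedDerivWithin_eq_iteratedDeriv_of_isOpen hso j hx).symm
  have hdiff : ∀ j < m, ∀ x ∈ Set.Ioi T₀, DifferentiableAt ℝ (iteratedDeriv j h) x := by
    intro j hj x hx
    have h1 : DifferentiableOn ℝ (iteratedDerivWithin j h (Set.Ioi T₀)) (Set.Ioi T₀) :=
      hcd'.differentiableOn_iteratedDerivWithin (by exact_mod_cast hj) hsu
    have h2 : DifferentiableAt ℝ (iteratedDerivWithin j h (Set.Ioi T₀)) x :=
      (h1 x hx).differentiableAt (hso.mem_nhds hx)
    apply h2.congr_of_eventuallyEq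
    filter_upwards [hso.mem_nhds hx] with y hy
    exact (iteratedDerivWithin_eq_iteratedDeriv_of_isOpen hso j hy).symm
  -- h is eventually antitone
  have hanti : ∃ T₂ : ℝ, AntitoneOn h (Set.Ici T₂) := by
    have hs0 := sign_alt hcont hdiff h0 hbase m le_rfl
    rw [Nat.sub_self, iteratedDeriv_zero] at hs0
    rcases Nat.even_or_odd m with hme | hmo
    · -- m even : deriv h eventually negative
      have hs1 := sign_alt hcont hdiff h0 hbase (m - 1) (Nat.sub_le m 1)
      have hm1 : m - (m - 1) = 1 := by omega
      rw [hm1, iteratedDeriv_one] at hs1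
      have hmodd : Odd (m - 1) := by
        rcases hme with ⟨k, hk⟩; refine ⟨k - 1, by omega⟩
      rw [hmodd.neg_one_pow] at hs1
      obtain ⟨a₁, ha₁⟩ := Filter.eventually_atTop.1 hs1
      refine ⟨max a₁ (T₀ + 1), ?_⟩
      have hsub : Set.Ici (max a₁ (T₀ + 1)) ⊆ Set.Ioi T₀ := fun x hx =>
        lt_of_lt_of_le (show T₀ < max a₁ (T₀ + 1) by have := le_max_right a₁ (T₀ + 1); linarith) hx
      apply antitoneOn_of_deriv_nonpos (convex_Ici _)
      · have := (hcont 0 (Nat.zero_le m)).mono hsub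
        rwa [iteratedDeriv_zero] at this
      · rw [interior_Ici]
        intro x hx
        have : DifferentiableAt ℝ (iteratedDeriv 0 h) x :=
          hdiff 0 hm x (hsub (Set.mem_Ici.2 (le_of_lt hx)))
        rw [iteratedDeriv_zero] at this
        exact this.differentiableWithinAt
      · rw [interior_Ici]
        intro x hx
        have := ha₁ x (le_trans (le_max_left _ _) (le_of_lt hx))
        linarith
    · -- m odd : contradiction with h eventually positive
      exfalso
      rw [hmo.neg_one_pow] at hs0
      obtain ⟨t, h1, h2⟩ := (hs0.and hpos).exists
      linarith
  obtain ⟨T₂, hanti⟩ := hanti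
  -- choice of M and t₁
  set M := max T₂ (max t₀ 0) + 1 with hM
  have hM0 : 0 < M := by
    have := le_max_right t₀ 0
    have := le_max_right T₂ (max t₀ 0)
    simp only [hM]; linarith [le_max_right T₂ (max t₀ 0), le_max_right t₀ (0:ℝ)]
  have hMt₀ : t₀ ≤ M := by
    have h1 : t₀ ≤ max t₀ 0 := le_max_left _ _
    have h2 : max t₀ 0 ≤ max T₂ (max t₀ 0) := le_max_right _ _
    simp only [hM]; linarith
  have hMT₂ : T₂ ≤ M := by
    have := le_max_left T₂ (max t₀ 0); simp only [hM]; linarith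
  refine ⟨2 * M, M, by linarith, hM0, ?_⟩
  intro t ht x hx y hy hxy
  simp only
  obtain ⟨hMx, hxt⟩ := hx
  obtain ⟨hMy, hyt⟩ := hy
  have ht2 : M ≤ t / 2 := by linarith
  -- ordering facts
  have o1 : t / 2 ≤ t - y := by linarith
  have o2 : t - y ≤ t - x := by linarith
  -- integrability
  have hInt : ∀ a b : ℝ, t₀ ≤ a → a ≤ b → IntervalIntegrable h volume a b := by
    intro a b ha hab
    have h1 : IntegrableOn h (Set.Icc a b) volume :=
      hloc.integrableOn_compact_subset (Set.Icc_subset_Ici_self.trans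
        (Set.Ici_subset_Ici.2 ha)) isCompact_Icc
    have h2 : IntegrableOn h (Set.uIcc a b) volume := by
      rwa [Set.uIcc_of_le hab]
    exact h2.intervalIntegrable
  have ht₀x : t₀ ≤ x := le_trans hMt₀ hMx
  have ht₀y : t₀ ≤ y := le_trans hMt₀ hMy
  have ht₀ty : t₀ ≤ t - y := by linarith
  have ht₀tx : t₀ ≤ t - x := by linarith
  -- key integral inequality
  have step1 : (y - x) * h y ≤ ∫ u in x..y, h u := by
    have hmono := intervalIntegral.integral_mono_on (f := fun _ => h y) (g := h)
      hxy (intervalIntegrable_const) (hInt x y ht₀x hxy) ?_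
    · rwa [intervalIntegral.integral_const, smul_eq_mul] at hmono
    · intro u hu
      exact hanti (by simp only [Set.mem_Ici]; linarith [hu.1]) (by simp only [Set.mem_Ici]; linarith) hu.2
  have step2 : (∫ u in (t - y)..(t - x), h u) ≤ (y - x) * h y := by
    have hmono := intervalIntegral.integral_mono_on (f := h) (g := fun _ => h y)
      o2 (hInt (t - y) (t - x) ht₀ty o2) (intervalIntegrable_const) ?_
    · rw [intervalIntegral.integral_const, smul_eq_mul] at hmono
      have : (t - x - (t - y)) = y - x := by ring
      rwa [this] at hmono
    · intro u hu
      exact hanti (by simp only [Set.mem_Ici]; linarith) (by simp only [Set.mem_Ici]; linarith [hu.1]) (by linarith [hu.1])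
  -- additivity
  have add1 : (∫ u in t₀..x, h u) + (∫ u in x..y, h u) = ∫ u in t₀..y, h u :=
    intervalIntegral.integral_add_adjacent_intervals (hInt t₀ x le_rfl ht₀x) (hInt x y ht₀x hxy)
  have add2 : (∫ u in t₀..(t - y), h u) + (∫ u in (t - y)..(t - x), h u) = ∫ u in t₀..(t - x), h u :=
    intervalIntegral.integral_add_adjacent_intervals (hInt t₀ (t - y) le_rfl ht₀ty)
      (hInt (t - y) (t - x) ht₀ty o2)
  -- conclude
  rw [hFeq _ ht₀ty, hFeq _ ht₀y, hFeq _ ht₀tx, hFeq _ ht₀x]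
  have e1 : ∀ u v : ℝ, ((1 - F t₀) * Real.exp u) * ((1 - F t₀) * Real.exp v)
      = (1 - F t₀) ^ 2 * Real.exp (u + v) := by
    intro u v; rw [Real.exp_add]; ring
  rw [e1, e1]
  apply mul_le_mul_of_nonneg_left _ (sq_nonneg _)
  apply Real.exp_le_exp.2
  have key : (∫ u in t₀..(t - x), h u) + (∫ u in t₀..x, h u)
      ≤ (∫ u in t₀..(t - y), h u) + (∫ u in t₀..y, h u) := by
    linarith [step1, step2, add1, add2]
  linarith
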